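/- arXiv:1809.00133 — 2 statements merged into one kernel-verified Lean document; each statement's English description precedes it below -/
import Mathlib

section
/- Assume every vertex of {1,…,n} lies in some facet of Δ but no vertex lies in all facets, and that G_Δ is isomorphic to the cycle C_m with m ≥ 4. Then Δ is shellable if and only if m = n and, after a suitable relabeling of the facets and vertices, vertex i belongs to F_i ∩ F_{i+1} and i ∉ F_j for all j ≠ i, i+1 (indices taken modulo n). -/
open Finset

/-- The facet graph `G_Δ` of a pure simplicial complex with facets `Fc i`, all of
cardinality `c`: two facets are adjacent iff they are connected in codimension one,
i.e. their intersection has cardinality `c - 1`. -/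
def facetGraph {n m : ℕ} (Fc : Fin m → Finset (Fin n)) (c : ℕ) : SimpleGraph (Fin m) where
  Adj i j := i ≠ j ∧ (Fc i ∩ Fc j).card + 1 = c
  symm := by
    constructor
    intro i j h
    exact ⟨h.1.symm, by rw [Finset.inter_comm]; exact h.2⟩
  loopless := by constructor; intro i h; exact h.1 rfl

/-- Shellability of a pure simplicial complex with facets `Fc i`: there is an ordering
`Fc (σ 0), …, Fc (σ (m-1))` of the facets such that for every `b ≥ 1` the subcomplex
`⟨Fc (σ 0), …, Fc (σ (b-1))⟩ ∩ ⟨Fc (σ b)⟩` is pure of dimension `|Fc (σ b)| - 2`;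
equivalently (the standard reformulation), for all `a < b` there is `c < b` with
`Fc (σ a) ∩ Fc (σ b) ⊆ Fc (σ c) ∩ Fc (σ b)` and `|Fc (σ c) ∩ Fc (σ b)| = |Fc (σ b)| - 1`. -/
def Shellable {n m : ℕ} (Fc : Fin m → Finset (Fin n)) : Prop :=
  ∃ σ : Equiv.Perm (Fin m), ∀ a b : Fin m, a < b → ∃ c : Fin m, c < b ∧
    Fc (σ a) ∩ Fc (σ b) ⊆ Fc (σ c) ∩ Fc (σ b) ∧
    (Fc (σ c) ∩ Fc (σ b)).card + 1 = (Fc (σ b)).card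


lemma finAddOneVal {m : ℕ} [NeZero m] (j : Fin m) :
    (j + 1).val = if j.val + 1 = m then 0 else j.val + 1 := by
  have hj := j.isLt
  have h : (j + 1).val = (j.val + (1:Fin m).val) % m := by simp [Fin.add_def]
  rw [Fin.val_one'] at h
  rcases Nat.lt_or_ge 1 m with h2 | h2
  · have e1 : 1 % m = 1 := Nat.mod_eq_of_lt h2
    rw [e1] at h
    rw [h]
    split
    · next he => rw [he, Nat.mod_self]
    · next he => exact Nat.mod_eq_of_lt (by omega)
  · have : m = 1 := by omega
    subst this
    simp at h ⊢
lemma finSubOneVal {m : ℕ} [NeZero m] (hm : 2 ≤ m) (j : Fin m) :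
    (j - 1).val = if j.val = 0 then m - 1 else j.val - 1 := by
  have hj := j.isLt
  have h : (j - 1).val = (m - (1:Fin m).val + j.val) % m := by simp [Fin.sub_def]
  rw [Fin.val_one'] at h
  have e1 : 1 % m = 1 := Nat.mod_eq_of_lt (by omega)
  rw [e1] at h
  rw [h]
  split
  · next he => rw [he, Nat.add_zero]; exact Nat.mod_eq_of_lt (by omega)
  · next he =>
    have h3 : m - 1 + j.val = m + (j.val - 1) := by omega
    rw [h3, Nat.add_mod_left]
    exact Nat.mod_eq_of_lt (by omega)

section
open Fin.NatCast
open Fin.CommRing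

lemma noBig {n m c : ℕ} [NeZero m] (hm : 4 ≤ m) (Fc : Fin m → Finset (Fin n))
    (hpure : ∀ i, (Fc i).card = c)
    (hnotall : ∀ a : Fin n, ∃ j, a ∉ Fc j)
    (hcyc : ∀ i j : Fin m, (i ≠ j ∧ (Fc i ∩ Fc j).card + 1 = c) ↔ (j = i + 1 ∨ i = j + 1))
    (σ : Equiv.Perm (Fin m))
    (hσ : ∀ a b : Fin m, a < b → ∃ d : Fin m, d < b ∧
      Fc (σ a) ∩ Fc (σ b) ⊆ Fc (σ d) ∩ Fc (σ b) ∧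
      (Fc (σ d) ∩ Fc (σ b)).card + 1 = (Fc (σ b)).card)
    (hc3 : 3 ≤ c) : False := by
  set z : Fin m := σ 0 with hz
  set g : ℕ → Fin m := fun j => z + (j : Fin m) with hg
  have g0 : g 0 = z := by simp [hg]
  have gadd : ∀ j : ℕ, g (j + 1) = g j + 1 := by
    intro j; simp only [hg]; push_cast; ring
  have gm0 : g m = g 0 := by
    simp only [hg]; norm_num [Fin.natCast_self]
  have idxg : ∀ p : Fin m, g (p - z).val = p := by
    intro p; simp only [hg, Fin.cast_val_eq_self]; ring
  have idxlt : ∀ p : Fin m, (p - z).val ≤ m - 1 := by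
    intro p; have := (p - z).isLt; omega
  have gidx : ∀ j : ℕ, j ≤ m - 1 → ((g j - z)).val = j := by
    intro j hj
    have : g j - z = (j : Fin m) := by simp only [hg]; ring
    rw [this, Fin.val_natCast, Nat.mod_eq_of_lt (by omega)]
  have ginj : ∀ j j' : ℕ, j ≤ m - 1 → j' ≤ m - 1 → g j = g j' → j = j' := by
    intro j j' hj hj' h
    have := gidx j hj
    have := gidx j' hj'
    rw [h] at *
    omega
  have tmaxlt : m - 1 < m := by omega
  set tmax : Fin m := ⟨m - 1, tmaxlt⟩ with htmax
  set L : Fin m := σ tmax with hL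
  set r : ℕ := (L - z).val with hr
  have hgr : g r = L := idxg L
  have hrm : r ≤ m - 1 := idxlt L
  have hτr : (σ.symm (g r)).val = m - 1 := by rw [hgr, hL, Equiv.symm_apply_apply]
  have hτz : (σ.symm (g 0)).val = 0 := by
    rw [g0, hz, Equiv.symm_apply_apply]; rfl
  have hr1 : 1 ≤ r := by
    rcases Nat.eq_zero_or_pos r with h | h
    · exfalso
      have : g 0 = g r := by rw [h]
      rw [hgr, g0, hL] at this
      have : (0 : Fin m) = tmax := σ.injective this
      have := Fin.ext_iff.mp this
      simp [htmax] at this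
      omega
    · exact h
  have hm1 : m - 1 + 1 = m := by omega
  -- the main consequence of the shelling condition
  have step : ∀ (w p : Fin m), (σ.symm w).val < (σ.symm p).val →
      ∀ v : Fin n, v ∈ Fc w → v ∈ Fc p →
      ∃ q : Fin m, (σ.symm q).val < (σ.symm p).val ∧ (p = q + 1 ∨ q = p + 1) ∧ v ∈ Fc q := by
    intro w p hlt v hvw hvp
    obtain ⟨i, hi, hsub, hcard⟩ := hσ (σ.symm w) (σ.symm p) (Fin.lt_def.mpr hlt)
    simp only [Equiv.apply_symm_apply] at hsub hcard
    have hv : v ∈ Fc (σ i) ∩ Fc p := hsub (mem_inter.mpr ⟨hvw, hvp⟩)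
    have hne : σ i ≠ p := by
      intro h
      rw [← h, Equiv.symm_apply_apply] at hi
      exact lt_irrefl _ hi
    rw [hpure] at hcard
    have hadj := (hcyc (σ i) p).mp ⟨hne, hcard⟩
    exact ⟨σ i, by rw [Equiv.symm_apply_apply]; exact hi, hadj, (mem_inter.mp hv).1⟩
  -- prefixes of the shelling are arcs of the cycle
  have arc : ∀ t : ℕ, t ≤ m - 1 → ∃ a b : ℕ, a + b = t ∧
      ∀ j : ℕ, j ≤ m - 1 → ((σ.symm (g j)).val ≤ t ↔ (j ≤ a ∨ m - b ≤ j)) := by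
    intro t
    induction t with
    | zero =>
      intro _
      refine ⟨0, 0, rfl, fun j hj => ?_⟩
      constructor
      · intro h
        left
        have hv0 : ((0 : Fin m)).val = 0 := Fin.val_zero m
        have h0 : σ.symm (g j) = 0 := Fin.ext (by omega)
        have : g j = σ 0 := by rw [← h0, Equiv.apply_symm_apply]
        have : g j = g 0 := by rw [this, ← hz, g0]
        have hle : (0:ℕ) ≤ m - 1 := by omega
        exact Nat.le_of_eq (ginj j 0 hj hle this)
      · intro h
        rcases h with h | h
        · have : j = 0 := by omega
          rw [this]; omega
        · omega
    | succ t iht =>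
      intro ht
      obtain ⟨a, b, hab, hch⟩ := iht (by omega)
      have htm : t + 1 < m := by omega
      set P : Fin m := σ ⟨t + 1, htm⟩ with hP
      have hτP : (σ.symm P).val = t + 1 := by rw [hP, Equiv.symm_apply_apply]
      -- P has an earlier neighbour
      have h01 : (0 : Fin m) < ⟨t + 1, htm⟩ := by
        rw [Fin.lt_def, Fin.val_zero]
        exact Nat.succ_pos t
      obtain ⟨i, hi, hsub, hcard⟩ := hσ 0 ⟨t + 1, htm⟩ h01
      have hne : σ i ≠ P := by
        intro h
        rw [hP] at h
        have := σ.injective h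
        rw [this] at hi
        exact lt_irrefl _ hi
      rw [hpure] at hcard
      have hadj := (hcyc (σ i) P).mp ⟨hne, hcard⟩
      set j₀ : ℕ := (σ i - z).val with hj₀
      have hgj₀ : g j₀ = σ i := idxg (σ i)
      have hj₀m : j₀ ≤ m - 1 := idxlt (σ i)
      have hτj₀ : (σ.symm (g j₀)).val ≤ t := by
        rw [hgj₀, Equiv.symm_apply_apply]
        have := Fin.lt_def.mp hi
        simp at this
        omega
      have hj₀ch : j₀ ≤ a ∨ m - b ≤ j₀ := (hch j₀ hj₀m).mp hτj₀
      -- the new facet is not in the old prefix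
      have hPnotch : ∀ j : ℕ, j ≤ m - 1 → g j = P → ¬(j ≤ a ∨ m - b ≤ j) := by
        intro j hj hgj hcon
        have := (hch j hj).mpr hcon
        rw [hgj, hτP] at this
        omega
      rcases hadj with hcase | hcase
      · -- P = σ i + 1 : extend to the right
        have hgP : g (j₀ + 1) = P := by rw [gadd, hgj₀, ← hcase]
        clear hcase hsub hcard hne hi h01
        have hj₀m' : j₀ ≤ m - 2 := by
          rcases Nat.lt_or_ge j₀ (m - 1) with h | h
          · omega
          · exfalso
            have hj₀e : j₀ = m - 1 := Nat.le_antisymm hj₀m h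
            rw [hj₀e] at hgP
            rw [hm1] at hgP
            rw [gm0] at hgP
            have h3 : (σ.symm (g 0)).val = t + 1 := by rw [hgP, hτP]
            rw [hτz] at h3
            exact Nat.succ_ne_zero t h3.symm
        have hb1 : j₀ + 1 ≤ m - 1 := by omega
        have hnotin := hPnotch (j₀ + 1) hb1 hgP
        have hj₀a : j₀ = a := by
          rcases hj₀ch with h | h
          · omega
          · exfalso
            have hb2 : m - b ≤ j₀ + 1 := by omega
            exact hnotin (Or.inr hb2)
        have hab1 : (a + 1) + b = t + 1 := by omega
        refine ⟨a + 1, b, hab1, fun j hj => ?_⟩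
        constructor
        · intro h
          rcases Nat.lt_or_ge (σ.symm (g j)).val (t + 1) with h' | h'
          · rcases (hch j hj).mp (by omega) with h'' | h''
            · left; omega
            · right; exact h''
          · have hτj : (σ.symm (g j)).val = t + 1 := by omega
            have : σ.symm (g j) = σ.symm P := Fin.ext (by rw [hτj, hτP])
            have : g j = P := σ.symm.injective this
            rw [← hgP] at this
            left
            rw [ginj j (j₀ + 1) hj (by omega) this]
            omega
        · intro h
          rcases h with h | h
          · rcases Nat.lt_or_ge a j with h' | h'
            · have : j = a + 1 := by omega
              rw [this, ← hj₀a, hgP]; omega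
            · have := (hch j hj).mpr (Or.inl h')
              omega
          · have := (hch j hj).mpr (Or.inr h)
            omega
      · -- σ i = P + 1 : extend to the left
        have hPg : ∀ jj : ℕ, jj + 1 = j₀ ∨ (j₀ = 0 ∧ jj = m - 1) → g jj = P := by
          intro jj hjj
          rcases hjj with hjj | ⟨hjj0, hjjm⟩
          · have h2 : g (jj + 1) = g jj + 1 := gadd jj
            rw [hjj, hgj₀, hcase] at h2
            exact (add_right_cancel h2.symm)
          · have h2 : g (m - 1 + 1) = g (m - 1) + 1 := gadd (m - 1)
            rw [hm1, gm0, ← hjj0, hgj₀, hcase] at h2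
            rw [hjjm]
            exact (add_right_cancel h2.symm)
        clear hcase hsub hcard hne hi h01
        rcases Nat.eq_zero_or_pos j₀ with hj₀0 | hj₀pos
        · -- wrap around : new left part
          have hgP : g (m - 1) = P := hPg (m - 1) (Or.inr ⟨hj₀0, rfl⟩)
          clear hPg
          have hb1 : m - 1 ≤ m - 1 := le_refl _
          have hnotin := hPnotch (m - 1) hb1 hgP
          have hb0 : b = 0 := by
            rcases Nat.eq_zero_or_pos b with h | h
            · exact h
            · exfalso
              have hb2 : m - b ≤ m - 1 := by omega
              exact hnotin (Or.inr hb2)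
          have ham : a < m - 1 := by
            rcases Nat.lt_or_ge a (m - 1) with h | h
            · exact h
            · exfalso
              have hb2 : m - 1 ≤ a := by omega
              exact hnotin (Or.inl hb2)
          have hab1 : a + 1 = t + 1 := by omega
          refine ⟨a, 1, hab1, fun j hj => ?_⟩
          constructor
          · intro h
            rcases Nat.lt_or_ge (σ.symm (g j)).val (t + 1) with h' | h'
            · rcases (hch j hj).mp (by omega) with h'' | h''
              · left; exact h''
              · right; omega
            · have hτj : (σ.symm (g j)).val = t + 1 := by omega
              have : σ.symm (g j) = σ.symm P := Fin.ext (by rw [hτj, hτP])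
              have : g j = P := σ.symm.injective this
              rw [← hgP] at this
              right
              rw [ginj j (m - 1) hj (by omega) this]
          · intro h
            rcases h with h | h
            · have := (hch j hj).mpr (Or.inl h)
              omega
            · have : j = m - 1 := by omega
              rw [this, hgP]; omega
        · -- extend the left part
          have hb0 : j₀ - 1 + 1 = j₀ := by omega
          have hgP : g (j₀ - 1) = P := hPg (j₀ - 1) (Or.inl hb0)
          clear hPg
          have hb1 : j₀ - 1 ≤ m - 1 := by omega
          have hnotin := hPnotch (j₀ - 1) hb1 hgP
          have hj₀b : j₀ = m - b ∧ 1 ≤ b := by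
            rcases hj₀ch with h | h
            · exfalso
              have hb2 : j₀ - 1 ≤ a := by omega
              exact hnotin (Or.inl hb2)
            · constructor
              · rcases Nat.lt_or_ge (j₀ - 1) (m - b) with h' | h'
                · omega
                · exfalso; exact hnotin (Or.inr h')
              · omega
          have hab1 : a + (b + 1) = t + 1 := by omega
          refine ⟨a, b + 1, hab1, fun j hj => ?_⟩
          constructor
          · intro h
            rcases Nat.lt_or_ge (σ.symm (g j)).val (t + 1) with h' | h'
            · rcases (hch j hj).mp (by omega) with h'' | h''
              · left; exact h''
              · right; omega
            · have hτj : (σ.symm (g j)).val = t + 1 := by omega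
              have : σ.symm (g j) = σ.symm P := Fin.ext (by rw [hτj, hτP])
              have : g j = P := σ.symm.injective this
              rw [← hgP] at this
              right
              have := ginj j (j₀ - 1) hj (by omega) this
              omega
          · intro h
            rcases h with h | h
            · have := (hch j hj).mpr (Or.inl h)
              omega
            · rcases Nat.lt_or_ge j (m - b) with h' | h'
              · have : j = j₀ - 1 := by omega
                rw [this, hgP]; omega
              · have := (hch j hj).mpr (Or.inr h')
                omega
  have tau_ne : ∀ j j' : ℕ, j ≤ m - 1 → j' ≤ m - 1 → j ≠ j' →
      (σ.symm (g j)).val ≠ (σ.symm (g j')).val := by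
    intro j j' hj hj' hne h
    exact hne (ginj j j' hj hj' (σ.symm.injective (Fin.ext h)))
  -- monotonicity of time along the two sides of the arc
  have monoR : ∀ j j' : ℕ, j < j' → j' ≤ r → (σ.symm (g j)).val < (σ.symm (g j')).val := by
    intro j j' hjj hjr
    have hj'm : j' ≤ m - 1 := le_trans hjr hrm
    have hjm : j ≤ m - 1 := by omega
    have hne := tau_ne j j' hjm hj'm (by omega)
    have hle : (σ.symm (g j)).val ≤ (σ.symm (g j')).val := by
      set t := (σ.symm (g j')).val with htdef
      rcases Nat.lt_or_ge t (m - 1) with hl | hl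
      · obtain ⟨a, b, hab, hch⟩ := arc t (by omega)
        have hj' : j' ≤ a ∨ m - b ≤ j' := (hch j' hj'm).mp (le_refl t)
        have hnr : ¬((σ.symm (g r)).val ≤ t) := by rw [hτr]; omega
        have hrch : ¬(r ≤ a ∨ m - b ≤ r) := fun hcon => hnr ((hch r hrm).mpr hcon)
        push_neg at hrch
        have hja : j ≤ a := by omega
        exact (hch j hjm).mpr (Or.inl hja)
      · have := (σ.symm (g j)).isLt
        omega
    omega
  have monoL : ∀ j j' : ℕ, r ≤ j → j < j' → j' ≤ m - 1 →
      (σ.symm (g j')).val < (σ.symm (g j)).val := by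
    intro j j' hrj hjj hj'm
    have hjm : j ≤ m - 1 := by omega
    have hne := tau_ne j' j hj'm hjm (by omega)
    have hle : (σ.symm (g j')).val ≤ (σ.symm (g j)).val := by
      set t := (σ.symm (g j)).val with htdef
      rcases Nat.lt_or_ge t (m - 1) with hl | hl
      · obtain ⟨a, b, hab, hch⟩ := arc t (by omega)
        have hjch : j ≤ a ∨ m - b ≤ j := (hch j hjm).mp (le_refl t)
        have hnr : ¬((σ.symm (g r)).val ≤ t) := by rw [hτr]; omega
        have hrch : ¬(r ≤ a ∨ m - b ≤ r) := fun hcon => hnr ((hch r hrm).mpr hcon)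
        push_neg at hrch
        have hjb : m - b ≤ j' := by omega
        exact (hch j' hj'm).mpr (Or.inr hjb)
      · have := (σ.symm (g j')).isLt
        omega
    omega
  -- propagation rules
  have ruleR : ∀ (v : Fin n) (j : ℕ), 1 ≤ j → j ≤ r - 1 → v ∈ Fc (g j) →
      (∃ w : Fin m, v ∈ Fc w ∧ (σ.symm w).val < (σ.symm (g j)).val) →
      v ∈ Fc (g (j - 1)) := by
    rintro v j hj1 hjr hvj ⟨w, hvw, hwlt⟩
    have e2 : j - 1 + 1 = j := by omega
    have hmono := monoR j (j + 1) (Nat.lt_succ_self j) (by omega)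
    obtain ⟨q, hqlt, hqadj, hvq⟩ := step w (g j) hwlt v hvw hvj
    rcases hqadj with h | h
    · have e1 : g ((j - 1) + 1) = g (j - 1) + 1 := gadd (j - 1)
      rw [e2] at e1
      rw [e1] at h
      have hq : g (j - 1) = q := add_right_cancel h
      rw [hq]; exact hvq
    · exfalso
      have e1 : g (j + 1) = g j + 1 := gadd j
      rw [← e1] at h
      rw [h] at hqlt
      exact Nat.lt_irrefl _ (Nat.lt_trans hmono hqlt)
  have ruleL : ∀ (v : Fin n) (j : ℕ), r + 1 ≤ j → j ≤ m - 1 → v ∈ Fc (g j) →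
      (∃ w : Fin m, v ∈ Fc w ∧ (σ.symm w).val < (σ.symm (g j)).val) →
      v ∈ Fc (g (j + 1)) := by
    rintro v j hjr hjm hvj ⟨w, hvw, hwlt⟩
    have e2 : j - 1 + 1 = j := by omega
    have hmono := monoL (j - 1) j (by omega) (by omega) hjm
    obtain ⟨q, hqlt, hqadj, hvq⟩ := step w (g j) hwlt v hvw hvj
    rcases hqadj with h | h
    · exfalso
      have e1 : g ((j - 1) + 1) = g (j - 1) + 1 := gadd (j - 1)
      rw [e2] at e1
      rw [e1] at h
      have hq : g (j - 1) = q := add_right_cancel h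
      rw [← hq] at hqlt
      exact Nat.lt_irrefl _ (Nat.lt_trans hmono hqlt)
    · have e1 : g (j + 1) = g j + 1 := gadd j
      rw [← e1] at h
      rw [← h]; exact hvq
  -- a vertex lying in the last facet and in both of its neighbours
  have e2r : r - 1 + 1 = r := by omega
  have hadjA : (Fc (g (r - 1)) ∩ Fc (g r)).card + 1 = c := by
    have e1 : g r = g (r - 1) + 1 := by rw [← e2r, gadd, e2r]
    exact ((hcyc (g (r - 1)) (g r)).mpr (Or.inl e1)).2
  have hadjB : (Fc (g r) ∩ Fc (g (r + 1))).card + 1 = c :=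
    ((hcyc (g r) (g (r + 1))).mpr (Or.inl (gadd r))).2
  obtain ⟨v, hv⟩ :
      (Fc (g (r - 1)) ∩ Fc (g r) ∩ (Fc (g r) ∩ Fc (g (r + 1)))).Nonempty := by
    apply Finset.card_pos.mp
    have hsubU : (Fc (g (r - 1)) ∩ Fc (g r)) ∪ (Fc (g r) ∩ Fc (g (r + 1))) ⊆ Fc (g r) :=
      union_subset inter_subset_right inter_subset_left
    have hU : ((Fc (g (r - 1)) ∩ Fc (g r)) ∪ (Fc (g r) ∩ Fc (g (r + 1)))).card ≤ c := by
      have h2 := card_le_card hsubU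
      rw [hpure] at h2
      exact h2
    have hI := card_union_add_card_inter (Fc (g (r - 1)) ∩ Fc (g r))
      (Fc (g r) ∩ Fc (g (r + 1)))
    omega
  rw [mem_inter, mem_inter, mem_inter] at hv
  obtain ⟨⟨hv1, hv2⟩, _, hv3⟩ := hv
  -- leapfrog propagation
  have LF : ∀ d jR jL : ℕ, jR ≤ r - 1 → r + 1 ≤ jL → jL ≤ m → jR + (m - jL) = d →
      v ∈ Fc (g jR) → v ∈ Fc (g jL) →
      (∀ j, j ≤ jR → v ∈ Fc (g j)) ∧ (∀ j, jL ≤ j → j ≤ m → v ∈ Fc (g j)) := by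
    intro d
    induction d using Nat.strong_induction_on with
    | _ d ih =>
      intro jR jL hjR hjL1 hjL2 hd hvR hvL
      have hrm2 : r + 1 ≤ m := by omega
      rcases Nat.eq_zero_or_pos jR with hR0 | hRpos
      · rcases Nat.lt_or_ge jL m with hLm | hLm
        · -- jR = 0 , jL < m : push left
          have hwlt : (σ.symm (g 0)).val < (σ.symm (g jL)).val := by
            have h1 := tau_ne jL 0 (by omega) (by omega) (by omega)
            omega
          have hvL' := ruleL v jL hjL1 (by omega) hvL ⟨g 0, (hR0 ▸ hvR), hwlt⟩
          obtain ⟨H1, H2⟩ := ih (d - 1) (by omega) jR (jL + 1) hjR (by omega) (by omega)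
            (by omega) hvR hvL'
          refine ⟨H1, fun j hj1 hj2 => ?_⟩
          rcases Nat.lt_or_ge jL j with h | h
          · exact H2 j (by omega) hj2
          · have hjeq : j = jL := by omega
            rw [hjeq]; exact hvL
        · -- jR = 0 , jL = m : done
          have hLm' : jL = m := by omega
          constructor
          · intro j hj
            have : j = 0 := by omega
            rw [this, ← hR0]; exact hvR
          · intro j hj1 hj2
            have : j = jL := by omega
            rw [this]; exact hvL
      · -- jR ≥ 1
        have hwright : ∀ w : Fin m, v ∈ Fc w → (σ.symm w).val < (σ.symm (g jR)).val →
            (∀ j, j ≤ jR → v ∈ Fc (g j)) ∧ (∀ j, jL ≤ j → j ≤ m → v ∈ Fc (g j)) := by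
          intro w hvw hwlt
          have hvR' := ruleR v jR hRpos hjR hvR ⟨w, hvw, hwlt⟩
          obtain ⟨H1, H2⟩ := ih (d - 1) (by omega) (jR - 1) jL (by omega) hjL1 hjL2
            (by omega) hvR' hvL
          refine ⟨fun j hj => ?_, H2⟩
          rcases Nat.lt_or_ge j jR with h | h
          · exact H1 j (by omega)
          · have hjeq : j = jR := by omega
            rw [hjeq]; exact hvR
        rcases Nat.lt_or_ge jL m with hLm | hLm
        · -- jR ≥ 1 , jL < m : compare the two times
          have hne := tau_ne jR jL (by omega) (by omega) (by omega)
          rcases Nat.lt_or_ge (σ.symm (g jR)).val (σ.symm (g jL)).val with hcmp | hcmp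
          · -- push left
            have hvL' := ruleL v jL hjL1 (by omega) hvL ⟨g jR, hvR, hcmp⟩
            obtain ⟨H1, H2⟩ := ih (d - 1) (by omega) jR (jL + 1) hjR (by omega) (by omega)
              (by omega) hvR hvL'
            refine ⟨H1, fun j hj1 hj2 => ?_⟩
            rcases Nat.lt_or_ge jL j with h | h
            · exact H2 j (by omega) hj2
            · have hjeq : j = jL := by omega
              rw [hjeq]; exact hvL
          · -- push right
            exact hwright (g jL) hvL (by omega)
        · -- jR ≥ 1 , jL = m : push right with witness g jL = g 0
          have hLm' : jL = m := by omega
          have hgm : g jL = g 0 := by rw [hLm']; exact gm0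
          have hwlt : (σ.symm (g jL)).val < (σ.symm (g jR)).val := by
            have h1 := tau_ne jR 0 (by omega) (by omega) (by omega)
            rw [hgm, hτz]
            omega
          exact hwright (g jL) hvL hwlt
  -- every facet contains v , contradiction
  obtain ⟨H1, H2⟩ := LF ((r - 1) + (m - (r + 1))) (r - 1) (r + 1) (le_refl _) (le_refl _)
    (by omega) rfl hv1 hv3
  have hall : ∀ p : Fin m, v ∈ Fc p := by
    intro p
    have hp : g ((p - z)).val = p := idxg p
    have hpm := idxlt p
    rcases Nat.lt_or_ge ((p - z)).val r with h | h
    · rw [← hp]; exact H1 _ (by omega)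
    · rcases Nat.eq_or_lt_of_le h with h' | h'
      · rw [← hp, ← h']; exact hv2
      · rw [← hp]; exact H2 _ (by omega) (by omega)
  obtain ⟨jj, hjj⟩ := hnotall v
  exact hjj (hall jj)

end

lemma fwd {n m c : ℕ} [NeZero m] (hm : 4 ≤ m) (Fc : Fin m → Finset (Fin n))
    (hinj : Function.Injective Fc) (hpure : ∀ i, (Fc i).card = c)
    (hcover : ∀ a : Fin n, ∃ j, a ∈ Fc j)
    (hnotall : ∀ a : Fin n, ∃ j, a ∉ Fc j)
    (hcyc : ∀ i j : Fin m, (i ≠ j ∧ (Fc i ∩ Fc j).card + 1 = c) ↔ (j = i + 1 ∨ i = j + 1))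
    (hs : ∃ σ : Equiv.Perm (Fin m), ∀ a b : Fin m, a < b → ∃ d : Fin m, d < b ∧
      Fc (σ a) ∩ Fc (σ b) ⊆ Fc (σ d) ∩ Fc (σ b) ∧
      (Fc (σ d) ∩ Fc (σ b)).card + 1 = (Fc (σ b)).card) :
    m = n ∧ ∃ e : Fin n ≃ Fin m, ∀ (a : Fin n) (j : Fin m),
      a ∈ Fc j ↔ (j = e a ∨ j = e a + 1) := by
  have hm2 : 2 ≤ m := by omega
  have hv0 : ((0 : Fin m)).val = 0 := Fin.val_zero m
  have hp2lt : 2 < m := by omega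
  set p2 : Fin m := ⟨2, hp2lt⟩ with hp2
  have hp2v : p2.val = 2 := rfl
  have hne02 : (0 : Fin m) ≠ p2 := by
    simp only [ne_eq, Fin.ext_iff]; omega
  have hnadj02 : (Fc 0 ∩ Fc p2).card + 1 ≠ c := by
    intro hcard
    have hor := (hcyc 0 p2).mp ⟨hne02, hcard⟩
    have ha1 := finAddOneVal (0 : Fin m)
    have ha2 := finAddOneVal p2
    rcases hor with h | h
    · rw [Fin.ext_iff] at h
      split at ha1 <;> omega
    · rw [Fin.ext_iff] at h
      split at ha2 <;> omega
  have hcge2 : 2 ≤ c := by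
    by_contra hlt
    push_neg at hlt
    interval_cases c
    · have h0 : Fc 0 = ∅ := card_eq_zero.mp (hpure 0)
      have h2 : Fc p2 = ∅ := card_eq_zero.mp (hpure p2)
      exact hne02 (hinj (h0.trans h2.symm))
    · have hle : (Fc 0 ∩ Fc p2).card ≤ 1 := by
        have h2 := card_le_card (inter_subset_left : Fc 0 ∩ Fc p2 ⊆ Fc 0)
        rw [hpure] at h2; exact h2
      have h1 : (Fc 0 ∩ Fc p2).card = 1 := by omega
      have e1 : Fc 0 ∩ Fc p2 = Fc 0 :=
        eq_of_subset_of_card_le inter_subset_left (by rw [hpure]; omega)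
      have e2 : Fc 0 ∩ Fc p2 = Fc p2 :=
        eq_of_subset_of_card_le inter_subset_right (by rw [hpure]; omega)
      exact hne02 (hinj (e1.symm.trans e2))
  obtain ⟨σ, hσ⟩ := hs
  have hc2 : c = 2 := by
    rcases Nat.lt_or_ge c 3 with h | h
    · omega
    · exact (noBig hm Fc hpure hnotall hcyc σ hσ h).elim
  subst hc2
  clear hσ hnadj02 hcge2
  -- basic Fin disequalities
  have hstep := fun i : Fin m => finAddOneVal i
  have hne1 : ∀ i : Fin m, i ≠ i + 1 := by
    intro i
    have a1 := hstep i
    have := i.isLt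
    simp only [ne_eq, Fin.ext_iff]
    split at a1 <;> omega
  have hne2 : ∀ i : Fin m, i ≠ i + 1 + 1 := by
    intro i
    have a1 := hstep i
    have a2 := hstep (i + 1)
    have := i.isLt
    simp only [ne_eq, Fin.ext_iff]
    split at a1 <;> split at a2 <;> omega
  have hne3 : ∀ i : Fin m, i ≠ i + 1 + 1 + 1 := by
    intro i
    have a1 := hstep i
    have a2 := hstep (i + 1)
    have a3 := hstep (i + 1 + 1)
    have := i.isLt
    simp only [ne_eq, Fin.ext_iff]
    split at a1 <;> split at a2 <;> split at a3 <;> omega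
  -- adjacency and disjointness
  have hadj : ∀ i : Fin m, (Fc i ∩ Fc (i + 1)).card = 1 := by
    intro i
    have h := ((hcyc i (i + 1)).mpr (Or.inl rfl)).2
    omega
  have hdisj : ∀ i j : Fin m, i ≠ j → j ≠ i + 1 → i ≠ j + 1 → Fc i ∩ Fc j = ∅ := by
    intro i j h1 h2 h3
    have hcardne : (Fc i ∩ Fc j).card + 1 ≠ 2 := by
      intro hcard
      rcases (hcyc i j).mp ⟨h1, hcard⟩ with h | h
      · exact h2 h
      · exact h3 h
    have hle : (Fc i ∩ Fc j).card ≤ 2 := by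
      have h4 := card_le_card (inter_subset_left : Fc i ∩ Fc j ⊆ Fc i)
      rw [hpure] at h4; exact h4
    have hne2' : (Fc i ∩ Fc j).card ≠ 2 := by
      intro hcard
      have e1 : Fc i ∩ Fc j = Fc i :=
        eq_of_subset_of_card_le inter_subset_left (by rw [hpure]; omega)
      have e2 : Fc i ∩ Fc j = Fc j :=
        eq_of_subset_of_card_le inter_subset_right (by rw [hpure]; omega)
      exact h1 (hinj (e1.symm.trans e2))
    have h0 : (Fc i ∩ Fc j).card = 0 := by omega
    exact card_eq_zero.mp h0
  have hadj_of_mem : ∀ i j : Fin m, i ≠ j → (Fc i ∩ Fc j).Nonempty →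
      (j = i + 1 ∨ i = j + 1) := by
    intro i j h1 hne
    by_contra hcon
    push_neg at hcon
    rw [hdisj i j h1 hcon.1 hcon.2] at hne
    exact not_nonempty_empty hne
  have hnot2 : ∀ i : Fin m, ¬(Fc i ∩ Fc (i + 1 + 1)).Nonempty := by
    intro i hne
    rcases hadj_of_mem i (i + 1 + 1) (hne2 i) hne with h | h
    · -- i + 1 + 1 = i + 1  :  impossible
      have h4 := add_right_cancel h
      exact hne1 i h4.symm
    · exact hne3 i h
  -- the common vertices of consecutive facets
  have hsing : ∀ i : Fin m, ∃ x, Fc i ∩ Fc (i + 1) = {x} :=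
    fun i => card_eq_one.mp (hadj i)
  choose s hsg using hsing
  have hsmem : ∀ i : Fin m, s i ∈ Fc i ∧ s i ∈ Fc (i + 1) := by
    intro i
    have h : s i ∈ Fc i ∩ Fc (i + 1) := by rw [hsg i]; exact mem_singleton_self _
    exact mem_inter.mp h
  have hsinj : Function.Injective s := by
    intro i j hij
    by_contra hne
    rcases hadj_of_mem i j hne ⟨s i, mem_inter.mpr ⟨(hsmem i).1, hij ▸ (hsmem j).1⟩⟩
      with h | h
    · -- j = i + 1 : then s i ∈ Fc i ∩ Fc (i+1+1)
      apply hnot2 i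
      refine ⟨s i, mem_inter.mpr ⟨(hsmem i).1, ?_⟩⟩
      rw [← h]
      exact hij ▸ (hsmem j).2
    · -- i = j + 1 : then s j ∈ Fc j ∩ Fc (j+1+1)
      apply hnot2 j
      refine ⟨s j, mem_inter.mpr ⟨(hsmem j).1, ?_⟩⟩
      rw [← h]
      exact hij ▸ (hsmem i).2
  -- each facet consists of exactly its two common vertices
  have hFc : ∀ j : Fin m, Fc j = {s (j - 1), s j} := by
    intro j
    have hsub1 : s (j - 1) ∈ Fc j := by
      have h := (hsmem (j - 1)).2
      rw [sub_add_cancel] at h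
      exact h
    have hsub2 : s j ∈ Fc j := (hsmem j).1
    have hnej : s (j - 1) ≠ s j := by
      intro h
      have h2 := hsinj h
      have h3 := finSubOneVal hm2 j
      rw [Fin.ext_iff] at h2
      have := j.isLt
      split at h3 <;> omega
    have hsub : {s (j - 1), s j} ⊆ Fc j := by
      intro x hx
      rcases mem_insert.mp hx with h | h
      · rw [h]; exact hsub1
      · rw [mem_singleton.mp h]; exact hsub2
    have hcard2 : ({s (j - 1), s j} : Finset (Fin n)).card = 2 := by
      rw [card_insert_of_notMem (by simp [hnej]), card_singleton]
    exact (eq_of_subset_of_card_le hsub (by rw [hpure, hcard2])).symm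
  have hssurj : Function.Surjective s := by
    intro x
    obtain ⟨j, hj⟩ := hcover x
    rw [hFc j] at hj
    rcases mem_insert.mp hj with h | h
    · exact ⟨j - 1, h.symm⟩
    · exact ⟨j, (mem_singleton.mp h).symm⟩
  have hbij : Function.Bijective s := ⟨hsinj, hssurj⟩
  have hmn : m = n := by
    have := Fintype.card_of_bijective hbij
    simpa using this
  refine ⟨hmn, (Equiv.ofBijective s hbij).symm, ?_⟩
  intro a j
  set e : Fin n ≃ Fin m := (Equiv.ofBijective s hbij).symm with he
  have happ : s (e a) = a := by
    rw [he]
    exact (Equiv.ofBijective s hbij).apply_symm_apply a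
  constructor
  · intro h
    rw [hFc j] at h
    rcases mem_insert.mp h with h' | h'
    · right
      have h2 : s (e a) = s (j - 1) := by rw [happ]; exact h'
      have h3 := hsinj h2
      rw [h3, sub_add_cancel]
    · left
      have h2 : s (e a) = s j := by rw [happ]; exact mem_singleton.mp h'
      exact (hsinj h2).symm
  · intro h
    rcases h with h | h
    · have h2 := (hsmem (e a)).1
      rw [happ] at h2
      rw [h]; exact h2
    · have h2 := (hsmem (e a)).2
      rw [happ] at h2
      rw [h]; exact h2

lemma bwd {n m : ℕ} [NeZero m] (hm : 4 ≤ m) (Fc : Fin m → Finset (Fin n))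
    (e : Fin n ≃ Fin m) (hmem : ∀ (a : Fin n) (j : Fin m), a ∈ Fc j ↔ (j = e a ∨ j = e a + 1)) :
    Shellable Fc := by
  have hm2 : 2 ≤ m := by omega
  have mem2 : ∀ (x : Fin n) (j : Fin m), x ∈ Fc j ↔ (e x = j ∨ e x = j - 1) := by
    intro x j
    rw [hmem]
    constructor
    · rintro (h | h)
      · exact Or.inl h.symm
      · right; rw [h, add_sub_cancel_right]
    · rintro (h | h)
      · exact Or.inl h.symm
      · right; rw [h, sub_add_cancel]
  have cardFc : ∀ j : Fin m, (Fc j).card = 2 := by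
    intro j
    have h1 := finSubOneVal hm2 j
    have hj := j.isLt
    have hne : j ≠ j - 1 := by
      simp only [ne_eq, Fin.ext_iff]; split at h1 <;> omega
    have hFj : Fc j = {e.symm j, e.symm (j - 1)} := by
      ext x
      rw [mem2]
      simp only [mem_insert, mem_singleton, Equiv.eq_symm_apply]
    rw [hFj, card_insert_of_notMem (by simp [e.symm.injective.ne hne]), card_singleton]
  refine ⟨1, ?_⟩
  intro a b hab
  simp only [Equiv.Perm.one_apply]
  have hav := a.isLt
  have hbv := b.isLt
  have habv : a.val < b.val := hab
  have sa := finSubOneVal hm2 a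
  have sb := finSubOneVal hm2 b
  have sb' : (b - 1).val = b.val - 1 := by rw [sb, if_neg (by omega)]
  by_cases hc : a.val = 0 ∧ b.val = m - 1
  · -- last edge closing the cycle: take c = a
    refine ⟨a, hab, Finset.Subset.refl _, ?_⟩
    rw [cardFc b]
    have hab1 : a - 1 = b := by rw [Fin.ext_iff]; split at sa <;> omega
    have h2 : a ≠ b := by simp only [ne_eq, Fin.ext_iff]; omega
    have h3 : a ≠ b - 1 := by simp only [ne_eq, Fin.ext_iff]; omega
    have : Fc a ∩ Fc b = {e.symm b} := by
      ext x
      simp only [mem_inter, mem_singleton, mem2, Equiv.eq_symm_apply, hab1]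
      constructor
      · rintro ⟨h | h, h' | h'⟩
        · exact absurd (h.symm.trans h') h2
        · exact absurd (h.symm.trans h') h3
        · exact h
        · exact h
      · intro h
        exact ⟨Or.inr h, Or.inl h⟩
    rw [this, card_singleton]
  · -- generic step: take c = b - 1
    have hlt : b - 1 < b := by
      show (b-1).val < b.val
      omega
    refine ⟨b - 1, hlt, ?_, ?_⟩
    · intro x hx
      rw [mem_inter, mem2, mem2] at hx
      have hx' : e x = b - 1 := by
        rcases hx with ⟨h | h, h' | h'⟩
        · exfalso
          have : a.val = b.val := Fin.ext_iff.mp (h.symm.trans h')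
          omega
        · exact h'
        · exfalso
          have : (a-1).val = b.val := Fin.ext_iff.mp (h.symm.trans h')
          split at sa <;> omega
        · exfalso
          have : (a-1).val = (b-1).val := Fin.ext_iff.mp (h.symm.trans h')
          split at sa <;> omega
      rw [mem_inter, mem2, mem2]
      exact ⟨Or.inl hx', Or.inr hx'⟩
    · rw [cardFc b]
      have hq := finSubOneVal hm2 (b - 1)
      have d1 : b - 1 - 1 ≠ b := by simp only [ne_eq, Fin.ext_iff]; split at hq <;> omega
      have d2 : b - 1 - 1 ≠ b - 1 := by simp only [ne_eq, Fin.ext_iff]; split at hq <;> omega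
      have d3 : b - 1 ≠ b := by simp only [ne_eq, Fin.ext_iff]; omega
      have : Fc (b - 1) ∩ Fc b = {e.symm (b - 1)} := by
        ext x
        simp only [mem_inter, mem_singleton, mem2, Equiv.eq_symm_apply]
        constructor
        · rintro ⟨h | h, h' | h'⟩
          · exact absurd (h.symm.trans h') d3
          · exact h'
          · exact absurd (h.symm.trans h') d1
          · exact absurd (h.symm.trans h') d2
        · intro h
          exact ⟨Or.inl h, Or.inr h⟩
      rw [this, card_singleton]


/-- Suppose every vertex lies in some facet but no vertex lies in all facets,
and the facet graph `G_Δ` is the cycle `Fc 0 — Fc 1 — ⋯ — Fc (m-1) — Fc 0` with `m ≥ 4`.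
Then `Δ` is shellable iff `m = n` and, after a suitable relabeling of the facets and
vertices, vertex `a` belongs to exactly the facets `F (e a)` and `F (e a + 1)`. -/
theorem stmt18 {n m c : ℕ} [NeZero m] (hm : 4 ≤ m)
    (Fc : Fin m → Finset (Fin n)) (hinj : Function.Injective Fc)
    (hpure : ∀ i, (Fc i).card = c)
    (hcover : ∀ a : Fin n, ∃ j, a ∈ Fc j)
    (hnotall : ∀ a : Fin n, ∃ j, a ∉ Fc j)
    (hcyc : ∀ i j : Fin m, (facetGraph Fc c).Adj i j ↔ (j = i + 1 ∨ i = j + 1)) :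
    Shellable Fc ↔
      (m = n ∧ ∃ e : Fin n ≃ Fin m, ∀ (a : Fin n) (j : Fin m),
        a ∈ Fc j ↔ (j = e a ∨ j = e a + 1)) := by
  have hcyc' : ∀ i j : Fin m,
      (i ≠ j ∧ (Fc i ∩ Fc j).card + 1 = c) ↔ (j = i + 1 ∨ i = j + 1) := hcyc
  constructor
  · intro hs
    exact fwd hm Fc hinj hpure hcover hnotall hcyc' hs
  · rintro ⟨hmn, e, hmem⟩
    exact bwd hm Fc e hmem
end

section
/- Assume G_Δ is a tree. Then the following are equivalent: (i) Δ^{(F,G)} is connected in codimension one for all facets F, G of Δ; (ii) whenever F = L_1, L_2, …, L_s = G is the unique path in G_Δ between two facets F and G, one has L_i ∩ L_k ⊆ L_j for all 1 ≤ i ≤ j ≤ k ≤ s; (iii) Δ is shellable. -/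
open Finset

open SimpleGraph SimpleGraph.Walk

variable {V : Type*} {G : SimpleGraph V}

@[simp] lemma getVert_nil' {u : V} (t : ℕ) : (Walk.nil : G.Walk u u).getVert t = u := rfl

lemma subwalk_exists {u v : V} (p : G.Walk u v) :
    ∀ x z : ℕ, x ≤ z → z ≤ p.length →
    ∃ q : G.Walk (p.getVert x) (p.getVert z),
      q.length = z - x ∧ (∀ t, q.getVert t = p.getVert (min (x + t) z)) ∧
      q.support ⊆ p.support ∧ (p.IsPath → q.IsPath) := by
  induction p with
  | nil =>
    intro x z hxz hz
    simp only [length_nil, Nat.le_zero] at hz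
    subst hz
    obtain rfl : x = 0 := Nat.le_zero.mp hxz
    exact ⟨Walk.nil, by simp, fun t => rfl, by simp, fun _ => IsPath.nil⟩
  | @cons u u' v h p ih =>
    intro x z hxz hz
    match x, z with
    | x, 0 =>
      obtain rfl : x = 0 := Nat.le_zero.mp hxz
      refine ⟨Walk.nil, by simp, fun t => ?_, by simp, fun _ => IsPath.nil⟩
      have : min (0 + t) 0 = 0 := by omega
      rw [this]
      rfl
    | 0, z' + 1 =>
      obtain ⟨q', hl, hg, hs, hp'⟩ := ih 0 z' (Nat.zero_le _)
        (Nat.succ_le_succ_iff.mp hz)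
      rw [getVert_zero, getVert_cons_succ]
      refine ⟨Walk.cons h (q'.copy (getVert_zero p) rfl), ?_, ?_, ?_, ?_⟩
      · simp [hl]
      · intro t
        cases t with
        | zero => simp
        | succ t =>
          have hmin : min (0 + (t + 1)) (z' + 1) = (min (0 + t) z') + 1 := by omega
          rw [hmin]
          exact ((getVert_copy q' t _ rfl).trans (hg t)).trans
            (getVert_cons_succ p h).symm
      · intro w hw
        simp only [support_cons, support_copy, List.mem_cons] at hw ⊢
        rcases hw with rfl | hw
        · exact Or.inl rfl
        · exact Or.inr (hs hw)
      · intro hpath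
        rw [cons_isPath_iff] at hpath
        refine IsPath.cons ?_ ?_
        · rw [isPath_copy]; exact hp' hpath.1
        · rw [support_copy]; exact fun hmem => hpath.2 (hs hmem)
    | x' + 1, z' + 1 =>
      obtain ⟨q', hl, hg, hs, hp'⟩ := ih x' z' (Nat.succ_le_succ_iff.mp hxz)
        (Nat.succ_le_succ_iff.mp hz)
      refine ⟨q', ?_, ?_, ?_, ?_⟩
      · simp [hl]
      · intro t
        have hmin : min (x' + 1 + t) (z' + 1) = (min (x' + t) z') + 1 := by omega
        rw [hmin]
        exact (hg t).trans (getVert_cons_succ p h).symm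
      · exact fun w hw => by
          simp only [support_cons, List.mem_cons]; exact Or.inr (hs hw)
      · intro hpath
        rw [cons_isPath_iff] at hpath
        exact hp' hpath.1

lemma path_eq' (hT : G.IsTree) {u v : V} {p q : G.Walk u v} (hp : p.IsPath) (hq : q.IsPath) :
    p = q := by
  obtain ⟨r, -, hr⟩ := hT.existsUnique_path u v
  rw [hr p hp, hr q hq]

lemma dist_getVert_le (p : G.Walk u v) {k : ℕ} (hk : k ≤ p.length) :
    G.dist u (p.getVert k) ≤ k := by
  obtain ⟨q, hl, -, -, -⟩ := subwalk_exists p 0 k (Nat.zero_le _) hk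
  have h1 : G.dist u (p.getVert k) ≤ (q.copy (getVert_zero p) rfl).length :=
    SimpleGraph.dist_le _
  rw [length_copy] at h1
  omega

lemma isPath_concat {u v w : V} {p : G.Walk u v} (hp : p.IsPath) (h : G.Adj v w)
    (hw : w ∉ p.support) : (p.concat h).IsPath := by
  rw [← isPath_reverse_iff, reverse_concat]
  exact IsPath.cons hp.reverse (by rwa [support_reverse, List.mem_reverse])

lemma getVert_concat' {u v w : V} (p : G.Walk u v) (h : G.Adj v w) {k : ℕ}
    (hk : k ≤ p.length) : (p.concat h).getVert k = p.getVert k := by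
  rw [concat_eq_append, getVert_append]
  by_cases hlt : k < p.length
  · simp [hlt]
  · have : k = p.length := by omega
    subst this
    simp [getVert_length]

lemma getVert_ne {u v : V} {p : G.Walk u v} (hp : p.IsPath) {i j : ℕ} (hij : i < j)
    (hj : j ≤ p.length) : p.getVert i ≠ p.getVert j := by
  intro heq
  obtain ⟨q, hl, -, -, hqp⟩ := subwalk_exists p i j (le_of_lt hij) hj
  have : (q.copy rfl heq.symm).IsPath := by rw [isPath_copy]; exact hqp hp
  rw [isPath_iff_eq_nil] at this
  have := congrArg Walk.length this
  rw [length_copy] at this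
  simp only [length_nil] at this
  omega

/-- In a tree, adjacent vertices have distances from `r` differing by exactly one. -/
lemma adj_dist (hT : G.IsTree) (r : V) {u v : V} (h : G.Adj u v) :
    G.dist r v = G.dist r u + 1 ∨ G.dist r u = G.dist r v + 1 := by
  have hconn := hT.isConnected
  obtain ⟨pu, hpu, hlu⟩ := hconn.exists_path_of_dist r u
  obtain ⟨pv, hpv, hlv⟩ := hconn.exists_path_of_dist r v
  have h1 : G.dist r v ≤ G.dist r u + 1 := by
    have := SimpleGraph.dist_le (pu.concat h)
    rwa [length_concat, hlu] at this
  have h2 : G.dist r u ≤ G.dist r v + 1 := by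
    have := SimpleGraph.dist_le (pv.concat h.symm)
    rwa [length_concat, hlv] at this
  have hne : G.dist r u ≠ G.dist r v := by
    intro heq
    -- u ∉ pv.support
    have hu : u ∉ pv.support := by
      intro hmem
      rw [mem_support_iff_exists_getVert] at hmem
      obtain ⟨k, hk, hkle⟩ := hmem
      have hd : G.dist r u ≤ k := hk ▸ dist_getVert_le pv hkle
      have : k = pv.length := by omega
      subst this
      rw [getVert_length] at hk
      exact h.ne (hk ▸ rfl)
    have hQ : (pv.concat h.symm).IsPath := isPath_concat hpv h.symm hu
    have := path_eq' hT hpu hQ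
    have := congrArg Walk.length this
    rw [length_concat] at this
    omega
  omega

lemma no_local_max (hT : G.IsTree) (r : V) {u v : V} {P : G.Walk u v} (hP : P.IsPath)
    {i : ℕ} (hi : i + 2 ≤ P.length)
    (h1 : G.dist r (P.getVert (i + 1)) = G.dist r (P.getVert i) + 1)
    (h2 : G.dist r (P.getVert (i + 1)) = G.dist r (P.getVert (i + 2)) + 1) : False := by
  have hconn := hT.isConnected
  set t := G.dist r (P.getVert (i + 1)) with ht
  obtain ⟨Pa, hpa, hla⟩ := hconn.exists_path_of_dist r (P.getVert i)
  obtain ⟨Pb, hpb, hlb⟩ := hconn.exists_path_of_dist r (P.getVert (i + 2))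
  have hmem : ∀ (w : V) (Q : G.Walk r w), Q.IsPath → Q.length + 1 = t →
      P.getVert (i + 1) ∉ Q.support := by
    intro w Q _ hQl hmemm
    rw [mem_support_iff_exists_getVert] at hmemm
    obtain ⟨k, hk, hkle⟩ := hmemm
    have := dist_getVert_le Q hkle
    rw [hk] at this
    omega
  have hQa : (Pa.concat (P.adj_getVert_succ (by omega))).IsPath :=
    isPath_concat hpa _ (hmem _ Pa hpa (by omega))
  have hQb : (Pb.concat (P.adj_getVert_succ (show i + 1 < P.length by omega)).symm).IsPath :=
    isPath_concat hpb _ (hmem _ Pb hpb (by omega))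
  have heq := path_eq' hT hQa hQb
  have hga : (Pa.concat (P.adj_getVert_succ (by omega : i < P.length))).getVert (t - 1)
      = P.getVert i := by
    rw [getVert_concat' _ _ (by omega), show t - 1 = Pa.length by omega, getVert_length]
  have hgb : (Pb.concat (P.adj_getVert_succ (show i + 1 < P.length by omega)).symm).getVert
      (t - 1) = P.getVert (i + 2) := by
    rw [getVert_concat' _ _ (by omega), show t - 1 = Pb.length by omega, getVert_length]
  have : P.getVert i = P.getVert (i + 2) := by
    have h3 := congrArg (fun Q : G.Walk r (P.getVert (i + 1)) => Q.getVert (t - 1)) heq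
    rw [hga, hgb] at h3
    exact h3
  exact getVert_ne hP (by omega) hi this

lemma penult_dist (hT : G.IsTree) (r : V) {A B : V} {P : G.Walk A B} (hP : P.IsPath)
    (hlen : 1 ≤ P.length) (hAB : G.dist r A ≤ G.dist r B) :
    G.dist r (P.getVert (P.length - 1)) + 1 = G.dist r B := by
  have hadj : G.Adj (P.getVert (P.length - 1)) B := by
    have := P.adj_getVert_succ (show P.length - 1 < P.length by omega)
    rwa [show P.length - 1 + 1 = P.length by omega, getVert_length] at this
  rcases adj_dist hT r hadj with hgood | hbad
  · omega
  · exfalso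
    have claim : ∀ k, k ≤ P.length →
        G.dist r (P.getVert (P.length - k)) = G.dist r B + k := by
      intro k
      induction k using Nat.strong_induction_on with
      | _ k ih =>
        match k with
        | 0 => intro _; rw [Nat.sub_zero, getVert_length]; omega
        | 1 => intro _; omega
        | (k + 2) =>
          intro hk2
          have hC1 := ih (k + 1) (by omega) (by omega)
          have hC0 := ih k (by omega) (by omega)
          have hadj2 : G.Adj (P.getVert (P.length - (k + 2)))
              (P.getVert (P.length - (k + 1))) := by
            have := P.adj_getVert_succ (show P.length - (k + 2) < P.length by omega)
            rwa [show P.length - (k + 2) + 1 = P.length - (k + 1) by omega] at this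
          rcases adj_dist hT r hadj2 with hc | hc
          · exfalso
            refine no_local_max hT r hP (i := P.length - (k + 2)) (by omega) ?_ ?_
            · rwa [show P.length - (k + 2) + 1 = P.length - (k + 1) by omega]
            · rw [show P.length - (k + 2) + 1 = P.length - (k + 1) by omega,
                show P.length - (k + 2) + 2 = P.length - k by omega]
              omega
          · omega
    have := claim P.length le_rfl
    rw [Nat.sub_self, getVert_zero] at this
    omega

lemma induce_reachable {S : Set V} :
    ∀ {u v : V} (W : G.Walk u v) (hW : ∀ x ∈ W.support, x ∈ S),
    (G.induce S).Reachable ⟨u, hW u W.start_mem_support⟩ ⟨v, hW v W.end_mem_support⟩ := by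
  intro u v W
  induction W with
  | nil => intro hW; rfl
  | @cons u u' v h p ih =>
    intro hW
    have hW' : ∀ x ∈ p.support, x ∈ S := fun x hx => hW x (by simp [hx])
    have hadj : (G.induce S).Adj ⟨u, hW u (Walk.start_mem_support _)⟩
        ⟨u', hW' u' p.start_mem_support⟩ := by
      simp only [comap_adj, Function.Embedding.coe_subtype]
      exact h
    exact hadj.reachable.trans (ih hW')

lemma walk_of_induce {S : Set V} {a b : S} (W : (G.induce S).Walk a b) :
    ∃ W' : G.Walk a.1 b.1, ∀ x ∈ W'.support, x ∈ S := by
  induction W with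
  | @nil u => exact ⟨Walk.nil, by rintro x hx; simp at hx; subst hx; exact u.2⟩
  | @cons u u' v h p ih =>
    obtain ⟨W', hW'⟩ := ih
    have hadj : G.Adj u.1 u'.1 := by
      simpa only [comap_adj, Function.Embedding.coe_subtype] using h
    refine ⟨Walk.cons hadj W', ?_⟩
    intro x hx
    simp only [support_cons, List.mem_cons] at hx
    rcases hx with rfl | hx
    · exact u.2
    · exact hW' x hx

section Main

variable {n m c : ℕ} {Fc : Fin m → Finset (Fin n)}

lemma lemB (htree : (facetGraph Fc c).IsTree)
    (hi : ∀ a b : Fin m,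
      ((facetGraph Fc c).induce {i : Fin m | Fc a ∩ Fc b ⊆ Fc i}).Connected) :
    ∀ (a b : Fin m) (p : (facetGraph Fc c).Walk a b), p.IsPath →
      ∀ x y z : ℕ, x ≤ y → y ≤ z → z ≤ p.length →
        Fc (p.getVert x) ∩ Fc (p.getVert z) ⊆ Fc (p.getVert y) := by
  intro a b p hp x y z hxy hyz hz
  have hF : p.getVert x ∈ {i : Fin m | Fc (p.getVert x) ∩ Fc (p.getVert z) ⊆ Fc i} :=
    Finset.inter_subset_left
  have hG : p.getVert z ∈ {i : Fin m | Fc (p.getVert x) ∩ Fc (p.getVert z) ⊆ Fc i} :=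
    Finset.inter_subset_right
  obtain ⟨W⟩ := (hi (p.getVert x) (p.getVert z)).preconnected ⟨_, hF⟩ ⟨_, hG⟩
  obtain ⟨W', hW'⟩ := walk_of_induce W
  obtain ⟨q, hl, hg, -, hqp⟩ := subwalk_exists p x z (le_trans hxy hyz) hz
  have heqq : q = W'.bypass := path_eq' htree (hqp hp) W'.bypass_isPath
  have hmem : p.getVert y ∈ q.support := by
    rw [SimpleGraph.Walk.mem_support_iff_exists_getVert]
    refine ⟨y - x, ?_, by omega⟩
    rw [hg]
    congr 1
    omega
  rw [heqq] at hmem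
  exact hW' _ (W'.support_bypass_subset hmem)

lemma lemA (htree : (facetGraph Fc c).IsTree)
    (hii : ∀ (a b : Fin m) (p : (facetGraph Fc c).Walk a b), p.IsPath →
      ∀ x y z : ℕ, x ≤ y → y ≤ z → z ≤ p.length →
        Fc (p.getVert x) ∩ Fc (p.getVert z) ⊆ Fc (p.getVert y)) :
    ∀ a b : Fin m,
      ((facetGraph Fc c).induce {i : Fin m | Fc a ∩ Fc b ⊆ Fc i}).Connected := by
  intro a b
  rw [SimpleGraph.connected_iff]
  constructor
  · rintro ⟨i, hia⟩ ⟨j, hja⟩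
    obtain ⟨q, hq, -⟩ := htree.existsUnique_path i j
    have hsup : ∀ x ∈ q.support, x ∈ {i : Fin m | Fc a ∩ Fc b ⊆ Fc i} := by
      intro x hx
      rw [SimpleGraph.Walk.mem_support_iff_exists_getVert] at hx
      obtain ⟨k, hkx, hk⟩ := hx
      have h2 := hii i j q hq 0 k q.length (Nat.zero_le _) hk le_rfl
      rw [SimpleGraph.Walk.getVert_zero, SimpleGraph.Walk.getVert_length, hkx] at h2
      exact subset_trans (Finset.subset_inter hia hja) h2
    exact induce_reachable q hsup
  · exact ⟨⟨a, Finset.inter_subset_left⟩⟩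

lemma lemC (hpure : ∀ i, (Fc i).card = c) (htree : (facetGraph Fc c).IsTree)
    (hii : ∀ (a b : Fin m) (p : (facetGraph Fc c).Walk a b), p.IsPath →
      ∀ x y z : ℕ, x ≤ y → y ≤ z → z ≤ p.length →
        Fc (p.getVert x) ∩ Fc (p.getVert z) ⊆ Fc (p.getVert y)) :
    Shellable Fc := by
  obtain ⟨r⟩ : Nonempty (Fin m) := htree.isConnected.nonempty
  set G := facetGraph Fc c with hGdef
  set d : Fin m → ℕ := fun i => G.dist r i with hd
  refine ⟨Tuple.sort d, ?_⟩
  set σ := Tuple.sort d with hσdef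
  have hmono := Tuple.monotone_sort d
  intro a b hab
  have hAB : σ a ≠ σ b := fun h => absurd (σ.injective h) (ne_of_lt hab)
  obtain ⟨P, hP, -⟩ := htree.existsUnique_path (σ a) (σ b)
  have hlen : 1 ≤ P.length := by
    rcases Nat.eq_zero_or_pos P.length with h0 | h1
    · exact absurd (SimpleGraph.Walk.eq_of_length_eq_zero h0) hAB
    · exact h1
  have hABd : G.dist r (σ a) ≤ G.dist r (σ b) := hmono (le_of_lt hab)
  have hpen := penult_dist htree r hP hlen hABd
  set w := P.getVert (P.length - 1) with hw
  have hadj : G.Adj w (σ b) := by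
    have := P.adj_getVert_succ (show P.length - 1 < P.length by omega)
    rwa [show P.length - 1 + 1 = P.length by omega,
      SimpleGraph.Walk.getVert_length] at this
  have hadj' : w ≠ σ b ∧ (Fc w ∩ Fc (σ b)).card + 1 = c := hadj
  refine ⟨σ.symm w, ?_, ?_, ?_⟩
  · by_contra hle
    push_neg at hle
    have h3 : G.dist r (σ b) ≤ G.dist r (σ (σ.symm w)) := hmono hle
    rw [Equiv.apply_symm_apply] at h3
    omega
  · have hsub := hii (σ a) (σ b) P hP 0 (P.length - 1) P.length (Nat.zero_le _)
      (by omega) le_rfl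
    rw [SimpleGraph.Walk.getVert_zero, SimpleGraph.Walk.getVert_length] at hsub
    rw [Equiv.apply_symm_apply]
    intro t ht
    exact Finset.mem_inter.2 ⟨hsub ht, (Finset.mem_inter.1 ht).2⟩
  · rw [Equiv.apply_symm_apply, hpure (σ b)]
    exact hadj'.2

end Main

section MainD

variable {n m c : ℕ} {Fc : Fin m → Finset (Fin n)}

open SimpleGraph SimpleGraph.Walk in
lemma lemD (hpure : ∀ i, (Fc i).card = c) (htree : (facetGraph Fc c).IsTree)
    (hshell : Shellable Fc) :
    ∀ (a b : Fin m) (p : (facetGraph Fc c).Walk a b), p.IsPath →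
      ∀ x y z : ℕ, x ≤ y → y ≤ z → z ≤ p.length →
        Fc (p.getVert x) ∩ Fc (p.getVert z) ⊆ Fc (p.getVert y) := by
  obtain ⟨σ, hσ⟩ := hshell
  set G := facetGraph Fc c with hGdef
  have key : ∀ N : ℕ, ∀ (a b : Fin m) (Q : G.Walk a b), Q.IsPath →
      max (σ.symm a : ℕ) (σ.symm b : ℕ) ≤ N → ∀ y ≤ Q.length,
      Fc a ∩ Fc b ⊆ Fc (Q.getVert y) := by
    intro N
    induction N using Nat.strong_induction_on with
    | _ N ih =>
    have core : ∀ (a b : Fin m) (Q : G.Walk a b), Q.IsPath →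
        (σ.symm b : ℕ) ≤ N → σ.symm a < σ.symm b → ∀ y, 0 < y → y < Q.length →
        ∀ v, v ∈ Fc a → v ∈ Fc b → v ∈ Fc (Q.getVert y) := by
      intro a b Q hQ hbN hab y hy0 hylen v hva hvb
      by_contra hvy
      obtain ⟨c', hc', hsub, hcard⟩ := hσ (σ.symm a) (σ.symm b) hab
      simp only [Equiv.apply_symm_apply] at hsub hcard
      set H := σ c' with hHdef
      have hposH : (σ.symm H : ℕ) < (σ.symm b : ℕ) := by
        rw [hHdef, Equiv.symm_apply_apply]
        exact hc'
      have hposa : (σ.symm a : ℕ) < (σ.symm b : ℕ) := hab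
      have hvH : v ∈ Fc H :=
        (Finset.mem_inter.1 (hsub (Finset.mem_inter.2 ⟨hva, hvb⟩))).1
      have hHb : H ≠ b := by
        rintro rfl
        rw [Finset.inter_self] at hcard
        omega
      have hadjHb : G.Adj H b := by
        refine ⟨hHb, ?_⟩
        rw [← hpure b]
        exact hcard
      by_cases hHw : H = Q.getVert (Q.length - 1)
      · obtain ⟨q, hl, hg, -, hqp⟩ :=
          subwalk_exists Q 0 (Q.length - 1) (Nat.zero_le _) (by omega)
        have happ := ih (max (σ.symm a : ℕ) (σ.symm H : ℕ)) (by omega)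
          (Q.getVert 0) (Q.getVert (Q.length - 1)) q (hqp hQ)
          (by rw [getVert_zero, ← hHw]) y (by omega)
        have hy' : v ∈ Fc (q.getVert y) := by
          refine happ (Finset.mem_inter.2 ⟨?_, ?_⟩)
          · rw [getVert_zero]; exact hva
          · rw [← hHw]; exact hvH
        rw [hg y, show min (0 + y) (Q.length - 1) = y by omega] at hy'
        exact hvy hy'
      · have hnotin : H ∉ Q.support := by
          intro hmem
          rw [mem_support_iff_exists_getVert] at hmem
          obtain ⟨k, hk, hkle⟩ := hmem
          have hkne : k ≠ Q.length := by
            rintro rfl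
            rw [getVert_length] at hk
            exact hHb hk.symm
          have hk1 : k ≠ Q.length - 1 := by
            rintro rfl
            exact hHw hk.symm
          obtain ⟨q2, hl2, -, -, hqp2⟩ := subwalk_exists Q k Q.length hkle le_rfl
          have hq2 : (q2.copy hk (Q.getVert_length)).IsPath := by
            rw [isPath_copy]; exact hqp2 hQ
          have hsingle : (Walk.cons hadjHb Walk.nil : G.Walk H b).IsPath := by
            rw [cons_isPath_iff]
            exact ⟨IsPath.nil, by simp [hHb]⟩
          have heq2 := path_eq' htree hq2 hsingle
          have hlen2 := congrArg Walk.length heq2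
          rw [length_copy] at hlen2
          simp only [length_cons, length_nil] at hlen2
          omega
        have hQ' : (Q.concat hadjHb.symm).IsPath := isPath_concat hQ hadjHb.symm hnotin
        have happ := ih (max (σ.symm a : ℕ) (σ.symm H : ℕ)) (by omega)
          a H (Q.concat hadjHb.symm) hQ' le_rfl y (by rw [length_concat]; omega)
        have hy' : v ∈ Fc ((Q.concat hadjHb.symm).getVert y) :=
          happ (Finset.mem_inter.2 ⟨hva, hvH⟩)
        rw [getVert_concat' _ _ (by omega)] at hy'
        exact hvy hy'
    -- main from core
    intro a b Q hQ hN y hy v hv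
    by_cases hy0 : y = 0
    · subst hy0
      rw [getVert_zero]
      exact (Finset.mem_inter.1 hv).1
    by_cases hylen : Q.length ≤ y
    · rw [getVert_of_length_le Q hylen]
      exact (Finset.mem_inter.1 hv).2
    push_neg at hylen
    have hab : a ≠ b := by
      rintro rfl
      rw [isPath_iff_eq_nil] at hQ
      subst hQ
      simp at hylen
    rcases lt_trichotomy (σ.symm a) (σ.symm b) with hlt | heq | hgt
    · exact core a b Q hQ (le_trans (le_max_right _ _) hN) hlt y
        (Nat.pos_of_ne_zero hy0) hylen v (Finset.mem_inter.1 hv).1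
        (Finset.mem_inter.1 hv).2
    · exact absurd (σ.symm.injective heq) hab
    · have hres := core b a Q.reverse hQ.reverse (le_trans (le_max_left _ _) hN) hgt
        (Q.length - y) (by omega) (by rw [length_reverse]; omega) v
        (Finset.mem_inter.1 hv).2 (Finset.mem_inter.1 hv).1
      rw [getVert_reverse, show Q.length - (Q.length - y) = y by omega] at hres
      exact hres
  -- conclude
  intro a b p hp x y z hxy hyz hz
  obtain ⟨q, hl, hg, -, hqp⟩ := subwalk_exists p x z (le_trans hxy hyz) hz
  have hkey := key (max (σ.symm (p.getVert x) : ℕ) (σ.symm (p.getVert z) : ℕ))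
    (p.getVert x) (p.getVert z) q (hqp hp) le_rfl (y - x) (by omega)
  rw [hg (y - x), show min (x + (y - x)) z = y by omega] at hkey
  exact hkey

end MainD

/-- Suppose the facet graph `G_Δ` of the pure simplicial complex `Δ` is a
tree. Then the following are equivalent: (i) `Δ^{(F,G)}` (the subcomplex generated by the
facets containing `F ∩ G`) is connected in codimension one for all facets `F, G`;
(ii) along the (unique) path `F = L 0, L 1, …, L s = G` in `G_Δ` between any two facets,
`L i ∩ L k ⊆ L j` for all `i ≤ j ≤ k`; (iii) `Δ` is shellable. -/
theorem stmt19 {n m c : ℕ}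
    (Fc : Fin m → Finset (Fin n)) (hinj : Function.Injective Fc)
    (hpure : ∀ i, (Fc i).card = c)
    (htree : (facetGraph Fc c).IsTree) :
    ((∀ a b : Fin m,
        ((facetGraph Fc c).induce {i : Fin m | Fc a ∩ Fc b ⊆ Fc i}).Connected) ↔
      (∀ (a b : Fin m) (p : (facetGraph Fc c).Walk a b), p.IsPath →
        ∀ x y z : ℕ, x ≤ y → y ≤ z → z ≤ p.length →
          Fc (p.getVert x) ∩ Fc (p.getVert z) ⊆ Fc (p.getVert y))) ∧
    ((∀ a b : Fin m,
        ((facetGraph Fc c).induce {i : Fin m | Fc a ∩ Fc b ⊆ Fc i}).Connected) ↔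
      Shellable Fc) := by
  refine ⟨⟨lemB htree, lemA htree⟩, ?_, ?_⟩
  · intro hi
    exact lemC hpure htree (lemB htree hi)
  · intro hs
    exact lemA htree (lemD hpure htree hs)
end
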